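/- Let R be a commutative ring in which every prime ideal is principal and the zero ideal is prime. Then R is a principal ideal domain. -/
import Mathlib

/-- If every prime ideal of `R` is principal and the zero ideal is prime, then `R`
is a principal ideal domain. -/
theorem stmt_4 (R : Type*) [CommRing R]
    (hprin : ∀ P : Ideal R, P.IsPrime → P.IsPrincipal)
    (hbot : (⊥ : Ideal R).IsPrime) :
    IsDomain R ∧ IsPrincipalIdealRing R := by
  have hnt : Nontrivial R := by
    refine ⟨0, 1, fun h => hbot.ne_top ?_⟩
    rw [Ideal.eq_top_iff_one, Ideal.mem_bot, ← h]
  have : NoZeroDivisors R := ⟨fun {a b} hab => by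
    have := hbot.mem_or_mem (by rwa [Ideal.mem_bot])
    simpa [Ideal.mem_bot] using this⟩
  exact ⟨NoZeroDivisors.to_isDomain R, IsPrincipalIdealRing.of_prime hprin⟩
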